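/- In the setting of Lemma 4.1 (real q-Weyl algebra represented with relations (rhoy)-(rhon) and Q-relations), for k < n the operators A_k := iλ^{-1}q_0^{-1}q^{-1}Q_{k+1}^{-1}x_{k+1}y_k satisfy the q-commutation A_{k-1}A_k = q A_k A_{k-1} + λ^{-1}q^{-1}Q_k^{-1}x_{k+1}y_{k-1}. -/

import Mathlib

section helpers
variable {L : Type*} [Ring L] [Algebra ℂ L]

private lemma flip_smul' {u v : L} {s : ℂ} (hs : s ≠ 0) (h : u = s • v) : v = s⁻¹ • u := by
  rw [h, smul_smul, inv_mul_cancel₀ hs, one_smul]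

private lemma ctx_of' {u v : L} {s : ℂ} (h : u * v = s • (v * u)) :
    ∀ z : L, u * (v * z) = s • (v * (u * z)) := fun z => by
  rw [← mul_assoc, h, smul_mul_assoc, mul_assoc]

private lemma ctx_comm' {u v : L} (h : u * v = v * u) :
    ∀ z : L, u * (v * z) = v * (u * z) := fun z => by
  rw [← mul_assoc, h, mul_assoc]

private lemma ctx_prod' {u v w : L} (h : u * v = w) :
    ∀ z : L, u * (v * z) = w * z := fun z => by
  rw [← mul_assoc, h]

private lemma ctx_one' {u v : L} (h : u * v = 1) :
    ∀ z : L, u * (v * z) = z := fun z => by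
  rw [← mul_assoc, h, one_mul]

private lemma inv_comm' {Q Qi u : L} (h1 : Q * Qi = 1) (h2 : Qi * Q = 1) (h : Q * u = u * Q) :
    Qi * u = u * Qi := by
  calc Qi * u = Qi * u * (Q * Qi) := by rw [h1, mul_one]
    _ = Qi * (Q * u) * Qi := by rw [h]; noncomm_ring
    _ = u * Qi := by rw [← mul_assoc, h2, one_mul]

private lemma inv_q' {Q Qi u : L} {s : ℂ} (hs : s ≠ 0) (h1 : Q * Qi = 1) (h2 : Qi * Q = 1)
    (h : Q * u = s • (u * Q)) : Qi * u = s⁻¹ • (u * Qi) := by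
  have h' : u * Q = s⁻¹ • (Q * u) := flip_smul' hs h
  calc Qi * u = Qi * u * (Q * Qi) := by rw [h1, mul_one]
    _ = Qi * (u * Q) * Qi := by noncomm_ring
    _ = s⁻¹ • (Qi * (Q * u) * Qi) := by rw [h', mul_smul_comm, smul_mul_assoc]
    _ = s⁻¹ • (u * Qi) := by rw [show Qi * (Q * u) * Qi = Qi * Q * (u * Qi) by noncomm_ring,
        h2, one_mul]

end helpers

/-- In the setting of Lemma 4.1 (represented real q-Weyl algebra),
for 2 ≤ k < n the operators A_k = iλ⁻¹q₀⁻¹q⁻¹Q_{k+1}⁻¹x_{k+1}y_k satisfy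
A_{k-1}A_k = q·A_kA_{k-1} + λ⁻¹q⁻¹·Q_k⁻¹x_{k+1}y_{k-1}. -/
theorem stmt16 {L : Type*} [Ring L] [Algebra ℂ L]
    (n : ℕ) (φ : ℝ) (hφ : |φ| < Real.pi)
    (q q₀ : ℂ) (hq : q = Complex.exp (Complex.I * φ))
    (hq0 : q₀ = Complex.exp (Complex.I * φ / 2))
    (lam : ℂ) (hlam : lam = q - q⁻¹)
    (x y Q Qi : ℕ → L)
    (hQinv : ∀ k, 1 ≤ k → k ≤ n + 1 → Q k * Qi k = 1 ∧ Qi k * Q k = 1)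
    (hQQ : ∀ k l, Q k * Q l = Q l * Q k)
    (hyy : ∀ k l, 1 ≤ k → k < l → l ≤ n → y k * y l = q • (y l * y k))
    (hxx : ∀ k l, 1 ≤ k → k < l → l ≤ n → x k * x l = q⁻¹ • (x l * x k))
    (hxy : ∀ k l, 1 ≤ k → k ≤ n → 1 ≤ l → l ≤ n → k ≠ l →
      x l * y k = q • (y k * x l))
    (hQy : ∀ k j, 1 ≤ j → j ≤ n → 1 ≤ k → k ≤ n + 1 →
      (j < k → Q k * y j = y j * Q k) ∧ (k ≤ j → Q k * y j = q ^ 2 • (y j * Q k)))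
    (hQx : ∀ k j, 1 ≤ j → j ≤ n → 1 ≤ k → k ≤ n + 1 →
      (j < k → Q k * x j = x j * Q k) ∧ (k ≤ j → Q k * x j = q⁻¹ ^ 2 • (x j * Q k)))
    (hyx : ∀ k, 1 ≤ k → k ≤ n → y k * x k = Q (k + 1) - q⁻¹ • Q k)
    (hxyQ : ∀ k, 1 ≤ k → k ≤ n → x k * y k = Q (k + 1) - q • Q k)
    (A : ℕ → L)
    (hA : ∀ k, 1 ≤ k → k < n →
      A k = (Complex.I * lam⁻¹ * q₀⁻¹ * q⁻¹) • (Qi (k + 1) * x (k + 1) * y k)) :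
    ∀ k, 2 ≤ k → k < n →
      A (k - 1) * A k = q • (A k * A (k - 1))
        + (lam⁻¹ * q⁻¹) • (Qi k * x (k + 1) * y (k - 1)) := by
  intro k hk2 hkn
  obtain ⟨a, rfl⟩ : ∃ a, k = a + 2 := ⟨k - 2, by omega⟩
  rw [show a + 2 - 1 = a + 1 from by omega, show a + 2 + 1 = a + 3 from by omega]
  -- scalar facts
  have hqne : q ≠ 0 := by rw [hq]; exact Complex.exp_ne_zero _
  have hq2ne : (q ^ 2 : ℂ) ≠ 0 := pow_ne_zero _ hqne
  have hq2ine : ((q ^ 2)⁻¹ : ℂ) ≠ 0 := inv_ne_zero hq2ne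
  have hq0ne : q₀ ≠ 0 := by rw [hq0]; exact Complex.exp_ne_zero _
  have hq0sq : q₀ * q₀ = q := by rw [hq0, hq, ← Complex.exp_add]; congr 1; ring
  -- Q inverses
  obtain ⟨hI2, hI2'⟩ := hQinv (a + 2) (by omega) (by omega)
  obtain ⟨hI3, hI3'⟩ := hQinv (a + 3) (by omega) (by omega)
  have i2 := ctx_one' hI2'
  have i3 := ctx_one' hI3'
  -- Q/Qi commutation with x, y
  have hQx33 : Q (a+3) * x (a+3) = (q ^ 2)⁻¹ • (x (a+3) * Q (a+3)) := by
    have h := (hQx (a+3) (a+3) (by omega) (by omega) (by omega) (by omega)).2 le_rfl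
    rwa [inv_pow] at h
  have cx3Q3 : ∀ z : L, x (a+3) * (Q (a+3) * z) = (q ^ 2) • (Q (a+3) * (x (a+3) * z)) := by
    have h := flip_smul' hq2ine hQx33
    rw [inv_inv] at h
    exact ctx_of' h
  have hQx23 : Q (a+2) * x (a+3) = (q ^ 2)⁻¹ • (x (a+3) * Q (a+2)) := by
    have h := (hQx (a+2) (a+3) (by omega) (by omega) (by omega) (by omega)).2 (by omega)
    rwa [inv_pow] at h
  have cx3Q2 : ∀ z : L, x (a+3) * (Q (a+2) * z) = (q ^ 2) • (Q (a+2) * (x (a+3) * z)) := by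
    have h := flip_smul' hq2ine hQx23
    rw [inv_inv] at h
    exact ctx_of' h
  have hQi2x3 : Qi (a+2) * x (a+3) = (q ^ 2) • (x (a+3) * Qi (a+2)) := by
    have h := inv_q' hq2ine hI2 hI2' hQx23
    rwa [inv_inv] at h
  have cx3Qi2 : ∀ z : L, x (a+3) * (Qi (a+2) * z) = (q ^ 2)⁻¹ • (Qi (a+2) * (x (a+3) * z)) :=
    ctx_of' (flip_smul' hq2ne hQi2x3)
  have hQi3x3 : Qi (a+3) * x (a+3) = (q ^ 2) • (x (a+3) * Qi (a+3)) := by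
    have h := inv_q' hq2ine hI3 hI3' hQx33
    rwa [inv_inv] at h
  have cQi3x3 : ∀ z : L, Qi (a+3) * (x (a+3) * z) = (q ^ 2) • (x (a+3) * (Qi (a+3) * z)) :=
    ctx_of' hQi3x3
  have hQy22 : Q (a+2) * y (a+2) = (q ^ 2) • (y (a+2) * Q (a+2)) :=
    (hQy (a+2) (a+2) (by omega) (by omega) (by omega) (by omega)).2 le_rfl
  have hQi2y2 : Qi (a+2) * y (a+2) = (q ^ 2)⁻¹ • (y (a+2) * Qi (a+2)) :=
    inv_q' hq2ne hI2 hI2' hQy22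
  have cy2Qi2 : ∀ z : L, y (a+2) * (Qi (a+2) * z) = (q ^ 2) • (Qi (a+2) * (y (a+2) * z)) := by
    have h := flip_smul' hq2ine hQi2y2
    rw [inv_inv] at h
    exact ctx_of' h
  have hQ3y1 : Q (a+3) * y (a+1) = y (a+1) * Q (a+3) :=
    (hQy (a+3) (a+1) (by omega) (by omega) (by omega) (by omega)).1 (by omega)
  have hQi3y1 : Qi (a+3) * y (a+1) = y (a+1) * Qi (a+3) := inv_comm' hI3 hI3' hQ3y1
  have cy1Qi3 : ∀ z : L, y (a+1) * (Qi (a+3) * z) = Qi (a+3) * (y (a+1) * z) :=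
    ctx_comm' hQi3y1.symm
  have hQ3x2 : Q (a+3) * x (a+2) = x (a+2) * Q (a+3) :=
    (hQx (a+3) (a+2) (by omega) (by omega) (by omega) (by omega)).1 (by omega)
  have cx2Qi3 : ∀ z : L, x (a+2) * (Qi (a+3) * z) = Qi (a+3) * (x (a+2) * z) :=
    ctx_comm' (inv_comm' hI3 hI3' hQ3x2).symm
  have cQi3Q2 : ∀ z : L, Qi (a+3) * (Q (a+2) * z) = Q (a+2) * (Qi (a+3) * z) :=
    ctx_comm' (inv_comm' hI3 hI3' (hQQ (a+3) (a+2)))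
  have cQi2Q3 : ∀ z : L, Qi (a+2) * (Q (a+3) * z) = Q (a+3) * (Qi (a+2) * z) :=
    ctx_comm' (inv_comm' hI2 hI2' (hQQ (a+2) (a+3)))
  -- pairwise x/y relations
  have r1 : x (a+3) * y (a+1) = q • (y (a+1) * x (a+3)) :=
    hxy (a+1) (a+3) (by omega) (by omega) (by omega) (by omega) (by omega)
  have c_y1x3 : ∀ z : L, y (a+1) * (x (a+3) * z) = q⁻¹ • (x (a+3) * (y (a+1) * z)) :=
    ctx_of' (flip_smul' hqne r1)
  have c_x2x3 : ∀ z : L, x (a+2) * (x (a+3) * z) = q⁻¹ • (x (a+3) * (x (a+2) * z)) :=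
    ctx_of' (hxx (a+2) (a+3) (by omega) (by omega) (by omega))
  have r3 : y (a+1) * y (a+2) = q • (y (a+2) * y (a+1)) :=
    hyy (a+1) (a+2) (by omega) (by omega) (by omega)
  have hxyQ2 : x (a+2) * y (a+2) = Q (a+3) - q • Q (a+2) := by
    have h := hxyQ (a+2) (by omega) (by omega)
    rwa [show a + 2 + 1 = a + 3 from by omega] at h
  have c_x2y2 : ∀ z : L, x (a+2) * (y (a+2) * z) = (Q (a+3) - q • Q (a+2)) * z :=
    ctx_prod' hxyQ2
  have hyx2 : y (a+2) * x (a+2) = Q (a+3) - q⁻¹ • Q (a+2) := by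
    have h := hyx (a+2) (by omega) (by omega)
    rwa [show a + 2 + 1 = a + 3 from by omega] at h
  have c_y2x2 : ∀ z : L, y (a+2) * (x (a+2) * z) = (Q (a+3) - q⁻¹ • Q (a+2)) * z :=
    ctx_prod' hyx2
  -- key term computations
  have t1 : Qi (a+2) * (Qi (a+3) * (x (a+3) * (Q (a+3) * y (a+1)))) =
      (q ^ 2) • (Qi (a+2) * (x (a+3) * y (a+1))) := by
    rw [cx3Q3]; simp only [mul_smul_comm]; rw [i3]
  have t2 : Qi (a+2) * (Qi (a+3) * (x (a+3) * (Q (a+2) * y (a+1)))) =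
      (q ^ 2 * q ^ 2) • (x (a+3) * (y (a+1) * Qi (a+3))) := by
    rw [cx3Q2]; simp only [mul_smul_comm]
    rw [cQi3Q2, i2, cQi3x3]
    simp only [smul_smul]
    rw [hQi3y1]
  have t1' : Qi (a+3) * (Qi (a+2) * (x (a+3) * (Q (a+3) * y (a+1)))) =
      (q ^ 2) • (Qi (a+2) * (x (a+3) * y (a+1))) := by
    rw [cx3Q3]; simp only [mul_smul_comm]; rw [cQi2Q3, i3]
  have t2' : Qi (a+3) * (Qi (a+2) * (x (a+3) * (Q (a+2) * y (a+1)))) =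
      (q ^ 2 * q ^ 2) • (x (a+3) * (y (a+1) * Qi (a+3))) := by
    rw [cx3Q2]; simp only [mul_smul_comm]
    rw [i2, cQi3x3]
    simp only [smul_smul]
    rw [hQi3y1]
  -- the two monomial identities
  have M1 : Qi (a+2) * x (a+2) * y (a+1) * (Qi (a+3) * x (a+3) * y (a+2)) =
      q • (Qi (a+2) * x (a+3) * y (a+1)) - (q ^ 4) • (x (a+3) * y (a+1) * Qi (a+3)) := by
    calc Qi (a+2) * x (a+2) * y (a+1) * (Qi (a+3) * x (a+3) * y (a+2))
        = Qi (a+2) * (x (a+2) * (y (a+1) * (Qi (a+3) * (x (a+3) * y (a+2))))) := by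
          noncomm_ring
      _ = Qi (a+2) * (Qi (a+3) * (x (a+2) * (y (a+1) * (x (a+3) * y (a+2))))) := by
          rw [cy1Qi3, cx2Qi3]
      _ = q⁻¹ • (Qi (a+2) * (Qi (a+3) * (x (a+2) * (x (a+3) * (y (a+1) * y (a+2)))))) := by
          rw [c_y1x3]; simp only [mul_smul_comm]
      _ = (q⁻¹ * q⁻¹) • (Qi (a+2) * (Qi (a+3) * (x (a+3) * (x (a+2) * (y (a+1) * y (a+2)))))) := by
          rw [c_x2x3]; simp only [mul_smul_comm, smul_smul]
      _ = (q⁻¹ * q⁻¹ * q) • (Qi (a+2) * (Qi (a+3) * (x (a+3) * (x (a+2) * (y (a+2) * y (a+1)))))) := by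
          rw [r3]; simp only [mul_smul_comm, smul_smul]
      _ = (q⁻¹ * q⁻¹ * q) • (Qi (a+2) * (Qi (a+3) * (x (a+3) * ((Q (a+3) - q • Q (a+2)) * y (a+1))))) := by
          rw [c_x2y2]
      _ = (q⁻¹ * q⁻¹ * q) • (Qi (a+2) * (Qi (a+3) * (x (a+3) * (Q (a+3) * y (a+1))))
            - q • (Qi (a+2) * (Qi (a+3) * (x (a+3) * (Q (a+2) * y (a+1)))))) := by
          rw [sub_mul, smul_mul_assoc]; simp only [mul_sub, mul_smul_comm]
      _ = (q⁻¹ * q⁻¹ * q) • ((q ^ 2) • (Qi (a+2) * (x (a+3) * y (a+1)))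
            - q • ((q ^ 2 * q ^ 2) • (x (a+3) * (y (a+1) * Qi (a+3))))) := by
          rw [t1, t2]
      _ = q • (Qi (a+2) * x (a+3) * y (a+1)) - (q ^ 4) • (x (a+3) * y (a+1) * Qi (a+3)) := by
          rw [mul_assoc (Qi (a+2)), mul_assoc (x (a+3))]
          match_scalars <;> field_simp <;> ring
  have M2 : Qi (a+3) * x (a+3) * y (a+2) * (Qi (a+2) * x (a+2) * y (a+1)) =
      (q ^ 2) • (Qi (a+2) * x (a+3) * y (a+1)) - (q ^ 3) • (x (a+3) * y (a+1) * Qi (a+3)) := by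
    calc Qi (a+3) * x (a+3) * y (a+2) * (Qi (a+2) * x (a+2) * y (a+1))
        = Qi (a+3) * (x (a+3) * (y (a+2) * (Qi (a+2) * (x (a+2) * y (a+1))))) := by
          noncomm_ring
      _ = (q ^ 2) • (Qi (a+3) * (x (a+3) * (Qi (a+2) * (y (a+2) * (x (a+2) * y (a+1)))))) := by
          rw [cy2Qi2]; simp only [mul_smul_comm]
      _ = (q ^ 2 * (q ^ 2)⁻¹) • (Qi (a+3) * (Qi (a+2) * (x (a+3) * (y (a+2) * (x (a+2) * y (a+1)))))) := by
          rw [cx3Qi2]; simp only [mul_smul_comm, smul_smul]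
      _ = (q ^ 2 * (q ^ 2)⁻¹) • (Qi (a+3) * (Qi (a+2) * (x (a+3) * ((Q (a+3) - q⁻¹ • Q (a+2)) * y (a+1))))) := by
          rw [c_y2x2]
      _ = (q ^ 2 * (q ^ 2)⁻¹) • (Qi (a+3) * (Qi (a+2) * (x (a+3) * (Q (a+3) * y (a+1))))
            - q⁻¹ • (Qi (a+3) * (Qi (a+2) * (x (a+3) * (Q (a+2) * y (a+1)))))) := by
          rw [sub_mul, smul_mul_assoc]; simp only [mul_sub, mul_smul_comm]
      _ = (q ^ 2 * (q ^ 2)⁻¹) • ((q ^ 2) • (Qi (a+2) * (x (a+3) * y (a+1)))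
            - q⁻¹ • ((q ^ 2 * q ^ 2) • (x (a+3) * (y (a+1) * Qi (a+3))))) := by
          rw [t1', t2']
      _ = (q ^ 2) • (Qi (a+2) * x (a+3) * y (a+1)) - (q ^ 3) • (x (a+3) * y (a+1) * Qi (a+3)) := by
          rw [mul_assoc (Qi (a+2)), mul_assoc (x (a+3))]
          match_scalars <;> field_simp <;> ring
  -- assemble
  have hA1 : A (a+1) = (Complex.I * lam⁻¹ * q₀⁻¹ * q⁻¹) • (Qi (a+2) * x (a+2) * y (a+1)) := by
    have h := hA (a+1) (by omega) (by omega)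
    rwa [show a + 1 + 1 = a + 2 from by omega] at h
  have hA2 : A (a+2) = (Complex.I * lam⁻¹ * q₀⁻¹ * q⁻¹) • (Qi (a+3) * x (a+3) * y (a+2)) := by
    have h := hA (a+2) (by omega) (by omega)
    rwa [show a + 2 + 1 = a + 3 from by omega] at h
  rw [hA1, hA2]
  simp only [smul_mul_assoc, mul_smul_comm, smul_smul]
  rw [M1, M2]
  have hscal : Complex.I * lam⁻¹ * q₀⁻¹ * q⁻¹ * (Complex.I * lam⁻¹ * q₀⁻¹ * q⁻¹) * q
      = q * (Complex.I * lam⁻¹ * q₀⁻¹ * q⁻¹ * (Complex.I * lam⁻¹ * q₀⁻¹ * q⁻¹)) * q ^ 2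
        + lam⁻¹ * q⁻¹ := by
    by_cases hl : lam = 0
    · simp [hl]
    · have hq0inv : q₀⁻¹ * q₀⁻¹ = q⁻¹ := by rw [← hq0sq, mul_inv]
      have hc2 : Complex.I * lam⁻¹ * q₀⁻¹ * q⁻¹ * (Complex.I * lam⁻¹ * q₀⁻¹ * q⁻¹)
          = -(lam⁻¹ * lam⁻¹ * ((q₀⁻¹ * q₀⁻¹) * (q⁻¹ * q⁻¹))) := by
        linear_combination (lam⁻¹ * lam⁻¹ * q₀⁻¹ * q₀⁻¹ * q⁻¹ * q⁻¹) * Complex.I_sq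
      have hqq : q * q⁻¹ = 1 := mul_inv_cancel₀ hqne
      have hll : lam * lam⁻¹ = 1 := mul_inv_cancel₀ hl
      have hql : lam * q = q ^ 2 - 1 := by
        rw [hlam]; field_simp
      rw [hc2, hq0inv]
      linear_combination (lam⁻¹ * q⁻¹ * (q⁻¹ * q + 1)) * hqq
        + (lam⁻¹ * q⁻¹ ^ 3 * q ^ 2) * hll
        + (- q * lam⁻¹ ^ 2 * q⁻¹ ^ 3) * hql
  match_scalars
  · linear_combination hscal
  · ring
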